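/- Grid structure preservation and recovery theorem: Let S and S' be open connected subsets of ℝ^d and h : S → S' a smooth diffeomorphism. Let A be a discrete coordination on S whose axis-separator set 𝒢(A) has a backbone, and let B be a discrete coordination on S'. Suppose h(grid_S(A)) = grid_{S'}(B). Then there exist a permutation σ of {1,…,d} and a sign vector s ∈ {−1,+1}^d such that for every j ∈ {1,…,d}, setting i = σ⁻¹(j), one has K := n_i = m_j (the numbers of thresholds agree), and for every k ∈ {1,…,K} and every z' ∈ S': if s_i = +1 then (z'_j = B_{j,k} ⇔ (h⁻¹ z')_i = A_{i,k}), (z'_j > B_{j,k} ⇔ (h⁻¹ z')_i > A_{i,k}), and (z'_j < B_{j,k} ⇔ (h⁻¹ z')_i < A_{i,k}); if s_i = −1 then (z'_j = B_{j,k} ⇔ (h⁻¹ z')_i = A_{i,K−k+1}), (z'_j > B_{j,k} ⇔ (h⁻¹ z')_i < A_{i,K−k+1}), and (z'_j < B_{j,k} ⇔ (h⁻¹ z')_i > A_{i,K−k+1}). -/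

import Mathlib

open Set MeasureTheory Topology

noncomputable section

abbrev Euc (d : ℕ) := EuclideanSpace ℝ (Fin d)

/-- Axis separator: points of `S` whose `i`-th coordinate equals `τ`. -/
def Gamma {d : ℕ} (S : Set (Euc d)) (i : Fin d) (τ : ℝ) : Set (Euc d) :=
  {z | z ∈ S ∧ z i = τ}

/-- Positive half: points of `S` whose `i`-th coordinate is greater than `τ`. -/
def GammaPos {d : ℕ} (S : Set (Euc d)) (i : Fin d) (τ : ℝ) : Set (Euc d) :=
  {z | z ∈ S ∧ τ < z i}

/-- Negative half: points of `S` whose `i`-th coordinate is less than `τ`. -/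
def GammaNeg {d : ℕ} (S : Set (Euc d)) (i : Fin d) (τ : ℝ) : Set (Euc d) :=
  {z | z ∈ S ∧ z i < τ}

/-- `Γ_S(i,τ)` is an axis-separator of `S`: it is nonempty and connected, and both of
its halves are nonempty and connected. (`IsConnected` includes nonemptiness.) -/
def IsAxisSeparator {d : ℕ} (S : Set (Euc d)) (i : Fin d) (τ : ℝ) : Prop :=
  IsConnected (Gamma S i τ) ∧ IsConnected (GammaPos S i τ) ∧ IsConnected (GammaNeg S i τ)

/-- A smooth diffeomorphism from `S` onto `S'` with explicit inverse `hinv`. -/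
structure IsSmoothDiffeoOn {d : ℕ} (h hinv : Euc d → Euc d) (S S' : Set (Euc d)) : Prop where
  mapsTo : Set.MapsTo h S S'
  mapsTo_inv : Set.MapsTo hinv S' S
  left_inv : ∀ z ∈ S, hinv (h z) = z
  right_inv : ∀ z' ∈ S', h (hinv z') = z'
  smooth : ContDiffOn ℝ (⊤ : ℕ∞) h S
  smooth_inv : ContDiffOn ℝ (⊤ : ℕ∞) hinv S'

/-- A discrete coordination on `S`: for each axis `i`, a strictly increasing nonempty tuple
of thresholds, each giving an axis-separator of `S`. -/
structure DiscreteCoordination {d : ℕ} (S : Set (Euc d)) where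
  n : Fin d → ℕ
  n_pos : ∀ i, 0 < n i
  A : (i : Fin d) → Fin (n i) → ℝ
  mono : ∀ i, StrictMono (A i)
  sep : ∀ i k, IsAxisSeparator S i (A i k)

/-- The grid of a discrete coordination: the union of all its axis-separators. -/
def DiscreteCoordination.grid {d : ℕ} {S : Set (Euc d)} (C : DiscreteCoordination S) :
    Set (Euc d) :=
  ⋃ (i : Fin d), ⋃ (k : Fin (C.n i)), Gamma S i (C.A i k)

/-- The parallel-separator-set along axis `i`. -/
def DiscreteCoordination.axisSet {d : ℕ} {S : Set (Euc d)} (C : DiscreteCoordination S)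
    (i : Fin d) : Set (Set (Euc d)) :=
  {H | ∃ k : Fin (C.n i), H = Gamma S i (C.A i k)}

/-- The axis-separator set of a discrete coordination. -/
def DiscreteCoordination.sepSet {d : ℕ} {S : Set (Euc d)} (C : DiscreteCoordination S) :
    Set (Set (Euc d)) :=
  {H | ∃ (i : Fin d) (k : Fin (C.n i)), H = Gamma S i (C.A i k)}

/-- A backbone: a choice of one separator per axis such that they all meet in a single
point and each of them meets every separator of the grid lying on a different axis. -/
def DiscreteCoordination.HasBackbone {d : ℕ} {S : Set (Euc d)}
    (C : DiscreteCoordination S) : Prop :=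
  ∃ kstar : (i : Fin d) → Fin (C.n i),
    (∃ z : Euc d, (⋂ (i : Fin d), Gamma S i (C.A i (kstar i))) = {z}) ∧
    ∀ (i j : Fin d), j ≠ i → ∀ k : Fin (C.n j),
      (Gamma S i (C.A i (kstar i)) ∩ Gamma S j (C.A j k)).Nonempty

/-- Quantization: `Q(x;T) = Σ_k 1[x ≥ T_k]`. -/
def Q {K : ℕ} (x : ℝ) (T : Fin K → ℝ) : ℕ :=
  (Finset.univ.filter fun k : Fin K => T k ≤ x).card

/-- Quantization with order reversal: `Q⁻(x;T) = Σ_k 1[x ≤ T_k]`. -/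
def Qneg {K : ℕ} (x : ℝ) (T : Fin K → ℝ) : ℕ :=
  (Finset.univ.filter fun k : Fin K => x ≤ T k).card

/-- Signed quantization: `Q^{+1} = Q` and `Q^{-1} = Q⁻`. -/
def Qsgn {K : ℕ} (s : ℤ) (x : ℝ) (T : Fin K → ℝ) : ℕ :=
  if s = 1 then Q x T else Qneg x T

/-- `μ` (absolutely continuous w.r.t. Lebesgue) has a non-removable discontinuity at `z`
if every measurable density of `μ` w.r.t. Lebesgue measure is discontinuous at `z`. -/
def HasNonRemovableDiscont {d : ℕ} (μ : Measure (Euc d)) (z : Euc d) : Prop :=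
  ∀ q : Euc d → ENNReal, Measurable q → μ = volume.withDensity q → ¬ ContinuousAt q z

/-- `T` has exactly two connected components, namely `Cp` and `Cm`. -/
def TwoComponents {d : ℕ} (T Cp Cm : Set (Euc d)) : Prop :=
  Cp ≠ Cm ∧
  (∃ x ∈ T, connectedComponentIn T x = Cp) ∧
  (∃ x ∈ T, connectedComponentIn T x = Cm) ∧
  ∀ x ∈ T, connectedComponentIn T x = Cp ∨ connectedComponentIn T x = Cm

/-- The intersection set of a finite family of separators: points lying on at least two
distinct members. -/
def interSet {d M : ℕ} (H : Fin M → Set (Euc d)) : Set (Euc d) :=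
  ⋃ (m : Fin M), ⋃ (m' : Fin M), ⋃ (_ : m ≠ m'), H m ∩ H m'

set_option maxHeartbeats 1000000

lemma euc_cont_coord {d : ℕ} (i : Fin d) : Continuous fun z : Euc d => z i :=
  (EuclideanSpace.proj (𝕜 := ℝ) i).continuous

-- derivative of a coordinate of g along a line

lemma hasDerivAt_line_coord {d : ℕ} {S' : Set (Euc d)} (hS' : IsOpen S')
    {g : Euc d → Euc d} (hg : ContDiffOn ℝ (⊤ : ℕ∞) g S')
    (w v : Euc d) (i : Fin d) (t : ℝ) (hwt : w + t • v ∈ S') :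
    HasDerivAt (fun s : ℝ => g (w + s • v) i) ((fderiv ℝ g (w + t • v) v) i) t := by
  have hline : HasDerivAt (fun s : ℝ => w + s • v) v t := by
    simpa using ((hasDerivAt_id t).smul_const v).const_add w
  have hgd : HasFDerivAt g (fderiv ℝ g (w + t • v)) (w + t • v) := by
    have := (hg.contDiffAt (hS'.mem_nhds hwt)).differentiableAt (by simp)
    exact this.hasFDerivAt
  have hcomp : HasDerivAt (fun s : ℝ => g (w + s • v)) ((fderiv ℝ g (w + t • v)) v) t :=
    HasFDerivAt.comp_hasDerivAt t hgd hline
  have hproj : HasFDerivAt (fun z : Euc d => z i) (EuclideanSpace.proj (𝕜 := ℝ) i)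
      (g (w + t • v)) := (EuclideanSpace.proj (𝕜 := ℝ) i).hasFDerivAt
  exact HasFDerivAt.comp_hasDerivAt t hproj hcomp

-- continuity of w ↦ (fderiv g w v) i on S'

lemma contOn_fderiv_coord {d : ℕ} {S' : Set (Euc d)} (hS' : IsOpen S')
    {g : Euc d → Euc d} (hg : ContDiffOn ℝ (⊤ : ℕ∞) g S') (v : Euc d) (i : Fin d) :
    ContinuousOn (fun w => (fderiv ℝ g w v) i) S' := by
  have h1 : ContinuousOn (fderiv ℝ g) S' :=
    hg.continuousOn_fderiv_of_isOpen hS' (by exact_mod_cast le_top)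
  have h2 : ContinuousOn (fun w => (fderiv ℝ g w) v) S' :=
    h1.clm_apply continuousOn_const
  exact ((euc_cont_coord i).comp_continuousOn h2)

-- surjectivity of the differential of hinv at points of S'

lemma fderiv_inv_surj {d : ℕ} {S S' : Set (Euc d)} (hS : IsOpen S) (hS' : IsOpen S')
    {h hinv : Euc d → Euc d} (hdiff : IsSmoothDiffeoOn h hinv S S')
    {z' : Euc d} (hz' : z' ∈ S') :
    Function.Surjective (fderiv ℝ hinv z') := by
  have hxS : hinv z' ∈ S := hdiff.mapsTo_inv hz'
  have hD : HasFDerivAt hinv (fderiv ℝ hinv z') z' :=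
    (((hdiff.smooth_inv.contDiffAt (hS'.mem_nhds hz')).differentiableAt (by simp))).hasFDerivAt
  have hE : HasFDerivAt h (fderiv ℝ h (hinv z')) (hinv z') :=
    (((hdiff.smooth.contDiffAt (hS.mem_nhds hxS)).differentiableAt (by simp))).hasFDerivAt
  have hcomp : HasFDerivAt (h ∘ hinv)
      ((fderiv ℝ h (hinv z')).comp (fderiv ℝ hinv z')) z' := hE.comp z' hD
  have hid : HasFDerivAt (h ∘ hinv) (ContinuousLinearMap.id ℝ (Euc d)) z' := by
    have hev : (h ∘ hinv) =ᶠ[𝓝 z'] id := by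
      filter_upwards [hS'.mem_nhds hz'] with w hw
      exact hdiff.right_inv w hw
    exact (hasFDerivAt_id z').congr_of_eventuallyEq hev
  have heq : (fderiv ℝ h (hinv z')).comp (fderiv ℝ hinv z')
      = ContinuousLinearMap.id ℝ (Euc d) := hcomp.unique hid
  have hinj : Function.Injective (fderiv ℝ hinv z') := by
    intro a b hab
    have : (fderiv ℝ h (hinv z')) ((fderiv ℝ hinv z') a)
        = (fderiv ℝ h (hinv z')) ((fderiv ℝ hinv z') b) := by rw [hab]
    have ha := congrArg (fun L => L a) heq
    have hb := congrArg (fun L => L b) heq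
    simp only [ContinuousLinearMap.comp_apply, ContinuousLinearMap.id_apply] at ha hb this
    rw [ha, hb] at this; exact this
  have := (LinearMap.injective_iff_surjective
    (f := (fderiv ℝ hinv z' : Euc d →ₗ[ℝ] Euc d))).mp hinj
  exact this

-- uniqueness of the "bad" axis

lemma bad_unique {d : ℕ} (D : Euc d →L[ℝ] Euc d) (hD : Function.Surjective D)
    (j i i' : Fin d)
    (hi : ∀ v : Euc d, v j = 0 → D v i = 0) (hi' : ∀ v : Euc d, v j = 0 → D v i' = 0) :
    i = i' := by
  by_contra hne
  set e : Euc d := EuclideanSpace.single j (1 : ℝ) with he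
  have hdecomp : ∀ (v : Euc d) (i'' : Fin d), (∀ u : Euc d, u j = 0 → D u i'' = 0) →
      D v i'' = v j * D e i'' := by
    intro v i'' hbad
    have hw : (v - v j • e) j = 0 := by
      simp [he, EuclideanSpace.single_apply]
    have : D (v - v j • e) i'' = 0 := hbad _ hw
    have hlin : D v = D (v - v j • e) + v j • D e := by
      rw [← ContinuousLinearMap.map_smul, ← ContinuousLinearMap.map_add]
      congr 1; abel
    calc D v i'' = (D (v - v j • e) + v j • D e) i'' := by rw [← hlin]
    _ = D (v - v j • e) i'' + v j * D e i'' := by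
        simp [PiLp.add_apply, PiLp.smul_apply, smul_eq_mul]
    _ = v j * D e i'' := by rw [this]; ring
  obtain ⟨v, hv⟩ := hD (EuclideanSpace.single i (1 : ℝ))
  have h1 : (1 : ℝ) = v j * D e i := by
    have := hdecomp v i hi
    rw [hv] at this
    simpa [EuclideanSpace.single_apply] using this
  have h2 : (0 : ℝ) = v j * D e i' := by
    have := hdecomp v i' hi'
    rw [hv] at this
    simpa [EuclideanSpace.single_apply, hne, Ne.symm hne] using this
  have hvj : v j ≠ 0 := by
    intro h0; rw [h0] at h1; simp at h1
  have hDei' : D e i' = 0 := by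
    rcases mul_eq_zero.mp h2.symm with h | h
    · exact absurd h hvj
    · exact h
  obtain ⟨u, hu⟩ := hD (EuclideanSpace.single i' (1 : ℝ))
  have h3 : (1 : ℝ) = u j * D e i' := by
    have := hdecomp u i' hi'
    rw [hu] at this
    simpa [EuclideanSpace.single_apply] using this
  rw [hDei'] at h3; simp at h3

lemma main_sep {d : ℕ} {S S' : Set (Euc d)} (hS : IsOpen S) (hS' : IsOpen S')
    {h hinv : Euc d → Euc d} (hdiff : IsSmoothDiffeoOn h hinv S S')
    (CA : DiscreteCoordination S) (j : Fin d) (τ : ℝ)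
    (hcon : IsConnected (Gamma S' j τ))
    (hsub : ∀ w ∈ Gamma S' j τ, ∃ p : Σ i : Fin d, Fin (CA.n i),
      hinv w p.1 = CA.A p.1 p.2) :
    ∃ p : Σ i : Fin d, Fin (CA.n i), ∀ w ∈ Gamma S' j τ,
      hinv w p.1 = CA.A p.1 p.2 := by
  classical
  set Γ := Gamma S' j τ with hΓdef
  have hΓS' : Γ ⊆ S' := fun w hw => hw.1
  set Vp : (Σ i : Fin d, Fin (CA.n i)) → Set (Euc d) := fun p =>
    {w | ∃ U : Set (Euc d), IsOpen U ∧ w ∈ U ∧ U ⊆ S' ∧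
      ∀ w' ∈ U, w' j = τ → hinv w' p.1 = CA.A p.1 p.2} with hVpdef
  have hVopen : ∀ p, IsOpen (Vp p) := by
    intro p
    rw [isOpen_iff_mem_nhds]
    rintro w ⟨U, hUo, hwU, hUS, hUc⟩
    exact Filter.mem_of_superset (hUo.mem_nhds hwU)
      (fun u hu => ⟨U, hUo, hu, hUS, hUc⟩)
  have hVsep : ∀ p, ∀ w ∈ Γ, w ∈ Vp p → hinv w p.1 = CA.A p.1 p.2 := by
    rintro p w hwΓ ⟨U, hUo, hwU, hUS, hUc⟩
    exact hUc w hwU hwΓ.2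
  -- derivative vanishing from local constancy
  have hbad_of : ∀ (p : Σ i : Fin d, Fin (CA.n i)), ∀ w ∈ Γ, w ∈ Vp p →
      ∀ v : Euc d, v j = 0 → (fderiv ℝ hinv w v) p.1 = 0 := by
    rintro p w hwΓ ⟨U, hUo, hwU, hUS, hUc⟩ v hvj
    have hwS' : w ∈ S' := hUS hwU
    have hco : ∀ t : ℝ, (w + t • v) j = τ := by
      intro t
      have : (w + t • v) j = w j + t * v j := rfl
      rw [this, hvj, hwΓ.2]; ring
    have hder : HasDerivAt (fun s : ℝ => hinv (w + s • v) p.1)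
        ((fderiv ℝ hinv w v) p.1) 0 := by
      have := hasDerivAt_line_coord hS' hdiff.smooth_inv w v p.1 0
        (by simpa using hwS')
      simpa using this
    have hev : (fun s : ℝ => hinv (w + s • v) p.1) =ᶠ[𝓝 (0:ℝ)]
        (fun _ => CA.A p.1 p.2) := by
      have hline : Filter.Tendsto (fun s : ℝ => w + s • v) (𝓝 0) (𝓝 w) := by
        have : Continuous (fun s : ℝ => w + s • v) := continuous_const.add (continuous_id.smul continuous_const)
        simpa using this.tendsto 0
      filter_upwards [hline.eventually_mem (hUo.mem_nhds hwU)] with s hs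
      exact hUc _ hs (hco s)
    have hder0 : HasDerivAt (fun s : ℝ => hinv (w + s • v) p.1) 0 0 := by
      exact (hasDerivAt_const (0:ℝ) (CA.A p.1 p.2)).congr_of_eventuallyEq hev
    exact hder.unique hder0
  have hVdisj : ∀ p q, ∀ w ∈ Γ, w ∈ Vp p → w ∈ Vp q → p = q := by
    intro p q w hwΓ hwp hwq
    have h1 := hVsep p w hwΓ hwp
    have h2 := hVsep q w hwΓ hwq
    have hfst : p.1 = q.1 := by
      by_contra hne
      exact hne (bad_unique (fderiv ℝ hinv w)
        (fderiv_inv_surj hS hS' hdiff (hΓS' hwΓ)) j p.1 q.1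
        (hbad_of p w hwΓ hwp) (hbad_of q w hwΓ hwq))
    obtain ⟨i1, k1⟩ := p
    obtain ⟨i2, k2⟩ := q
    simp only at hfst
    subst hfst
    simp only at h1 h2
    have : k1 = k2 := (CA.mono i1).injective (h1.symm.trans h2)
    rw [this]
  -- the local covering lemma
  have hcover : ∀ z' ∈ Γ, ∃ p, z' ∈ Vp p := by
    intro z' hz'Γ
    have hz'S' : z' ∈ S' := hΓS' hz'Γ
    set F0 : Finset (Σ i : Fin d, Fin (CA.n i)) :=
      Finset.univ.filter (fun p => hinv z' p.1 = CA.A p.1 p.2) with hF0def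
    -- initial neighborhood avoiding separators not through hinv z'
    have hOp : ∀ p : Σ i : Fin d, Fin (CA.n i),
        IsOpen {w ∈ S' | hinv w p.1 ≠ CA.A p.1 p.2} := by
      intro p
      have hc : ContinuousOn (fun w => hinv w p.1) S' :=
        (euc_cont_coord p.1).comp_continuousOn hdiff.smooth_inv.continuousOn
      have := hc.isOpen_inter_preimage hS' (isOpen_compl_singleton (x := CA.A p.1 p.2))
      exact this
    set U0 : Set (Euc d) := S' ∩ ⋂ p ∈ Finset.univ.filter
        (fun p : Σ i : Fin d, Fin (CA.n i) => ¬ (hinv z' p.1 = CA.A p.1 p.2)),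
        {w ∈ S' | hinv w p.1 ≠ CA.A p.1 p.2} with hU0def
    have hU0o : IsOpen U0 := hS'.inter (isOpen_biInter_finset (fun p _ => hOp p))
    have hz'U0 : z' ∈ U0 := by
      refine ⟨hz'S', ?_⟩
      simp only [Set.mem_iInter]
      intro p hp
      simp only [Finset.mem_filter] at hp
      exact ⟨hz'S', hp.2⟩
    have hU0S' : U0 ⊆ S' := fun w hw => hw.1
    have hcov0 : ∀ w ∈ U0, w j = τ → ∃ p ∈ F0, hinv w p.1 = CA.A p.1 p.2 := by
      rintro w ⟨hwS', hwI⟩ hwj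
      obtain ⟨p, hp⟩ := hsub w ⟨hwS', hwj⟩
      refine ⟨p, ?_, hp⟩
      rw [hF0def, Finset.mem_filter]
      refine ⟨Finset.mem_univ _, ?_⟩
      by_contra hne
      simp only [Set.mem_iInter] at hwI
      exact (hwI p (by simp [hne])).2 hp
    -- strong induction on the finset
    suffices claim : ∀ F : Finset (Σ i : Fin d, Fin (CA.n i)), F ⊆ F0 →
        ∀ U : Set (Euc d), IsOpen U → z' ∈ U → U ⊆ S' →
        (∀ w ∈ U, w j = τ → ∃ p ∈ F, hinv w p.1 = CA.A p.1 p.2) →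
        ∃ p, z' ∈ Vp p by
      exact claim F0 (subset_refl _) U0 hU0o hz'U0 hU0S' hcov0
    intro F
    induction F using Finset.strongInductionOn with
    | _ F IH =>
    intro hFsub U hUo hz'U hUS' hcov
    obtain ⟨p₁, hp₁F, _⟩ := hcov z' hz'U hz'Γ.2
    by_cases hFone : ∀ q ∈ F, q = p₁
    · refine ⟨p₁, U, hUo, hz'U, hUS', ?_⟩
      intro w hw hwj
      obtain ⟨p, hpF, hval⟩ := hcov w hw hwj
      have := hFone p hpF
      subst this
      exact hval
    · push_neg at hFone
      obtain ⟨q₁, hq₁F, hq₁ne⟩ := hFone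
      set Bad : Fin d → Prop :=
        fun i => ∀ v : Euc d, v j = 0 → (fderiv ℝ hinv z' v) i = 0 with hBaddef
      have hbadu : ∀ p ∈ F, ∀ q ∈ F, Bad p.1 → Bad q.1 → p = q := by
        intro p hpF q hqF hbp hbq
        have hfst : p.1 = q.1 := bad_unique (fderiv ℝ hinv z')
          (fderiv_inv_surj hS hS' hdiff hz'S') j p.1 q.1 hbp hbq
        have hp0 := hFsub hpF
        have hq0 := hFsub hqF
        rw [hF0def, Finset.mem_filter] at hp0 hq0
        obtain ⟨i1, k1⟩ := p
        obtain ⟨i2, k2⟩ := q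
        simp only at hfst
        subst hfst
        simp only at hp0 hq0
        have : k1 = k2 := (CA.mono i1).injective (hp0.2.symm.trans hq0.2)
        rw [this]
      have hp0ex : ∃ p0 ∈ F, ¬ Bad p0.1 := by
        by_cases hb : Bad p₁.1
        · exact ⟨q₁, hq₁F, fun hbq => hq₁ne (hbadu q₁ hq₁F p₁ hp₁F hbq hb)⟩
        · exact ⟨p₁, hp₁F, hb⟩
      obtain ⟨p0, hp0F, hp0nb⟩ := hp0ex
      replace hp0nb : ¬ ∀ v : Euc d, v j = 0 → (fderiv ℝ hinv z' v) p0.1 = 0 := hp0nb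
      push_neg at hp0nb
      obtain ⟨v, hvj, hvne⟩ := hp0nb
      set c : Euc d → ℝ := fun w => (fderiv ℝ hinv w v) p0.1 with hcdef
      set U1 : Set (Euc d) := {w ∈ U | c w ≠ 0} with hU1def
      have hU1S' : U1 ⊆ S' := fun w hw => hUS' hw.1
      have hU1o : IsOpen U1 := by
        rw [isOpen_iff_mem_nhds]
        rintro w ⟨hwU, hwc⟩
        have hcc : ContinuousAt c w :=
          (contOn_fderiv_coord hS' hdiff.smooth_inv v p0.1).continuousAt
            (hS'.mem_nhds (hUS' hwU))
        filter_upwards [hUo.mem_nhds hwU, hcc.eventually_ne hwc] with u hu1 hu2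
        exact ⟨hu1, hu2⟩
      have hz'U1 : z' ∈ U1 := ⟨hz'U, hvne⟩
      have hcov1 : ∀ w ∈ U1, w j = τ → ∃ p ∈ F.erase p0,
          hinv w p.1 = CA.A p.1 p.2 := by
        rintro w ⟨hwU, hwc⟩ hwj
        have hwS' : w ∈ S' := hUS' hwU
        by_cases hw0 : hinv w p0.1 = CA.A p0.1 p0.2
        case neg =>
          obtain ⟨p, hpF, hval⟩ := hcov w hwU hwj
          exact ⟨p, Finset.mem_erase.mpr
            ⟨fun he => hw0 (he ▸ hval), hpF⟩, hval⟩
        case pos =>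
          obtain ⟨ε, hε, hball⟩ := Metric.isOpen_iff.mp hU1o w ⟨hwU, hwc⟩
          have hvne0 : v ≠ 0 := by
            intro h0
            apply hvne
            rw [h0]
            simp
          have hnv : (0:ℝ) < ‖v‖ := norm_pos_iff.mpr hvne0
          set δ : ℝ := ε / ‖v‖ with hδdef
          have hδ : 0 < δ := div_pos hε hnv
          have hmem : ∀ t : ℝ, |t| < δ → w + t • v ∈ U1 := by
            intro t ht
            apply hball
            rw [Metric.mem_ball, dist_eq_norm]
            have : w + t • v - w = t • v := by abel
            rw [this, norm_smul, Real.norm_eq_abs]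
            calc |t| * ‖v‖ < δ * ‖v‖ := by
                  exact mul_lt_mul_of_pos_right ht hnv
            _ = ε := by rw [hδdef]; field_simp
          have hcoj : ∀ t : ℝ, (w + t • v) j = τ := by
            intro t
            have : (w + t • v) j = w j + t * v j := rfl
            rw [this, hvj, hwj]; ring
          set ψ : ℝ → ℝ := fun t => hinv (w + t • v) p0.1 with hψdef
          have hψd : ∀ t : ℝ, |t| < δ → HasDerivAt ψ (c (w + t • v)) t := by
            intro t ht
            exact hasDerivAt_line_coord hS' hdiff.smooth_inv w v p0.1 t
              (hU1S' (hmem t ht))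
          -- at most one zero of ψ - A in (0, δ)
          have hkey : ∀ a b : ℝ, a ∈ Ioo (0:ℝ) δ → b ∈ Ioo (0:ℝ) δ → a < b →
              ψ a = CA.A p0.1 p0.2 → ψ b = CA.A p0.1 p0.2 → False := by
            intro a b ha hb hab hea heb
            have habs : ∀ x ∈ Icc a b, |x| < δ := by
              intro x hx
              rw [abs_lt]
              constructor
              · linarith [ha.1, hx.1]
              · linarith [hb.2, hx.2]
            have hcont : ContinuousOn ψ (Icc a b) := by
              intro x hx
              exact ((hψd x (habs x hx)).continuousAt).continuousWithinAt
            obtain ⟨ξ, hξ, hξ0⟩ := exists_hasDerivAt_eq_zero hab hcont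
              (hea.trans heb.symm)
              (fun x hx => hψd x (habs x ⟨le_of_lt hx.1, le_of_lt hx.2⟩))
            have hξδ : |ξ| < δ := habs ξ ⟨le_of_lt hξ.1, le_of_lt hξ.2⟩
            exact (hmem ξ hξδ).2 hξ0
          have huniq : ∀ t1 ∈ Ioo (0:ℝ) δ, ψ t1 = CA.A p0.1 p0.2 →
              ∀ t2 ∈ Ioo (0:ℝ) δ, ψ t2 = CA.A p0.1 p0.2 → t1 = t2 := by
            intro t1 ht1 he1 t2 ht2 he2
            by_contra hne
            rcases lt_or_gt_of_ne hne with hlt | hlt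
            · exact hkey t1 t2 ht1 ht2 hlt he1 he2
            · exact hkey t2 t1 ht2 ht1 hlt he2 he1
          have hfreq : ∀ᶠ t in 𝓝[>] (0:ℝ),
              t ∈ Ioo (0:ℝ) δ ∧ ψ t ≠ CA.A p0.1 p0.2 := by
            have hev1 : ∀ᶠ t in 𝓝[>] (0:ℝ), t ∈ Ioo (0:ℝ) δ :=
              Ioo_mem_nhdsGT_of_mem ⟨le_refl _, hδ⟩
            by_cases hz : ∃ t1 ∈ Ioo (0:ℝ) δ, ψ t1 = CA.A p0.1 p0.2
            · obtain ⟨t1, ht1, he1⟩ := hz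
              have hev2 : ∀ᶠ t in 𝓝[>] (0:ℝ), t ∈ Ioo (0:ℝ) t1 :=
                Ioo_mem_nhdsGT_of_mem ⟨le_refl _, ht1.1⟩
              filter_upwards [hev1, hev2] with t htδ htt1
              refine ⟨htδ, fun he => ?_⟩
              have := huniq t htδ he t1 ht1 he1
              rw [this] at htt1
              exact lt_irrefl t1 htt1.2
            · push_neg at hz
              filter_upwards [hev1] with t htδ
              exact ⟨htδ, hz t htδ⟩
          have hex : ∃ p ∈ F.erase p0, ∃ᶠ t in 𝓝[>] (0:ℝ),
              hinv (w + t • v) p.1 = CA.A p.1 p.2 := by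
            by_contra hcon'
            push_neg at hcon'
            have hall : ∀ᶠ t in 𝓝[>] (0:ℝ), ∀ p ∈ F.erase p0,
                hinv (w + t • v) p.1 ≠ CA.A p.1 p.2 :=
              (Filter.eventually_all_finset _).mpr
                (fun p hp => hcon' p hp)
            obtain ⟨t, ⟨htδ, htψ⟩, hnone⟩ := (hfreq.and hall).exists
            have htU1 : w + t • v ∈ U1 := hmem t (by
              rw [abs_lt]; exact ⟨by linarith [htδ.1, hδ], htδ.2⟩)
            obtain ⟨p, hpF, hval⟩ := hcov (w + t • v) htU1.1 (hcoj t)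
            by_cases hpp0 : p = p0
            · subst hpp0
              exact htψ hval
            · exact hnone p (Finset.mem_erase.mpr ⟨hpp0, hpF⟩) hval
          obtain ⟨p, hpE, hfr⟩ := hex
          have htend : Filter.Tendsto (fun t : ℝ => hinv (w + t • v) p.1)
              (𝓝[>] (0:ℝ)) (𝓝 (hinv w p.1)) := by
            have h1 : Continuous (fun t : ℝ => w + t • v) :=
              continuous_const.add (continuous_id.smul continuous_const)
            have hcw : ContinuousAt hinv w :=
              hdiff.smooth_inv.continuousOn.continuousAt (hS'.mem_nhds hwS')
            have t1 : Filter.Tendsto (fun t : ℝ => w + t • v) (𝓝 (0:ℝ)) (𝓝 w) := by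
              simpa using h1.tendsto 0
            have t3 : Filter.Tendsto (fun z : Euc d => z p.1) (𝓝 (hinv w))
                (𝓝 (hinv w p.1)) := (euc_cont_coord p.1).tendsto _
            exact (t3.comp (hcw.tendsto.comp t1)).mono_left
              (nhdsWithin_le_nhds (s := Set.Ioi (0:ℝ)))
          have : hinv w p.1 = CA.A p.1 p.2 :=
            tendsto_nhds_unique_of_frequently_eq htend tendsto_const_nhds hfr
          exact ⟨p, hpE, this⟩
      exact IH (F.erase p0) (Finset.erase_ssubset hp0F)
        ((F.erase_subset p0).trans hFsub) U1 hU1o hz'U1 hU1S' hcov1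
  -- conclude by connectedness
  obtain ⟨z0, hz0Γ⟩ := hcon.nonempty
  obtain ⟨pstar, hpstar⟩ := hcover z0 hz0Γ
  refine ⟨pstar, ?_⟩
  have hsubset : Γ ⊆ Vp pstar := by
    set v : Set (Euc d) := ⋃ (p : Σ i : Fin d, Fin (CA.n i)),
      ⋃ (_ : p ≠ pstar), Vp p with hvdef
    have hvo : IsOpen v := isOpen_iUnion (fun p => isOpen_iUnion (fun _ => hVopen p))
    have hcup : Γ ⊆ Vp pstar ∪ v := by
      intro w hw
      obtain ⟨p, hp⟩ := hcover w hw
      by_cases hpp : p = pstar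
      · subst hpp; exact Or.inl hp
      · exact Or.inr (Set.mem_iUnion.mpr ⟨p, Set.mem_iUnion.mpr ⟨hpp, hp⟩⟩)
    by_cases hvne : (Γ ∩ v).Nonempty
    · exfalso
      obtain ⟨w, hwΓ, hwu, hwv⟩ := hcon.isPreconnected (Vp pstar) v
        (hVopen pstar) hvo hcup ⟨z0, hz0Γ, hpstar⟩ hvne
      obtain ⟨p, hpmem⟩ := Set.mem_iUnion.mp hwv
      obtain ⟨hppstar, hwp⟩ := Set.mem_iUnion.mp hpmem
      exact hppstar (hVdisj p pstar w hwΓ hwp hwu)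
    · intro w hw
      rcases hcup hw with h1 | h1
      · exact h1
      · exact absurd ⟨w, hw, h1⟩ hvne
  intro w hw
  exact hVsep pstar w hw (hsubset hw)

lemma IsSmoothDiffeoOn.symm {d : ℕ} {h hinv : Euc d → Euc d} {S S' : Set (Euc d)}
    (hd : IsSmoothDiffeoOn h hinv S S') : IsSmoothDiffeoOn hinv h S' S :=
  ⟨hd.mapsTo_inv, hd.mapsTo, hd.right_inv, hd.left_inv, hd.smooth_inv, hd.smooth⟩

lemma sigma_cast {d : ℕ} {m : Fin d → ℕ} (q : Σ jj : Fin d, Fin (m jj)) (j : Fin d)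
    (e : q.1 = j) : q = ⟨j, Fin.cast (congrArg m e) q.2⟩ := by
  obtain ⟨j0, l⟩ := q
  simp only at e
  subst e
  rfl

lemma sigma_snd_eq {d : ℕ} {m : Fin d → ℕ} {j : Fin d} {l l' : Fin (m j)}
    (h : (⟨j, l⟩ : Σ jj : Fin d, Fin (m jj)) = ⟨j, l'⟩) : l = l' := by
  have := Sigma.mk.inj_iff.mp h
  exact eq_of_heq this.2

lemma gamma_sub {d : ℕ} {S : Set (Euc d)} (hS : IsOpen S) {i i' : Fin d} {τ τ' : ℝ}
    (hne : (Gamma S i τ).Nonempty) (hsub : Gamma S i τ ⊆ Gamma S i' τ') :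
    i = i' ∧ τ = τ' := by
  obtain ⟨z, hzS, hzi⟩ := hne
  have hz' := hsub ⟨hzS, hzi⟩
  by_cases hii : i = i'
  · subst hii
    exact ⟨rfl, by rw [← hzi, hz'.2]⟩
  · exfalso
    obtain ⟨ε, hε, hball⟩ := Metric.isOpen_iff.mp hS z hzS
    set z2 : Euc d := z + (ε/2) • EuclideanSpace.single i' (1:ℝ) with hz2def
    have hz2S : z2 ∈ S := by
      apply hball
      rw [Metric.mem_ball, dist_eq_norm, hz2def]
      have : z + (ε/2) • EuclideanSpace.single i' (1:ℝ) - z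
          = (ε/2) • EuclideanSpace.single i' (1:ℝ) := by abel
      rw [this, norm_smul, EuclideanSpace.norm_single]
      simp only [norm_one, mul_one, Real.norm_eq_abs]
      rw [abs_of_pos (by linarith)]
      linarith
    have hz2i : z2 i = τ := by
      rw [hz2def]
      have : (z + (ε/2) • EuclideanSpace.single i' (1:ℝ)) i
          = z i + (ε/2) * (EuclideanSpace.single i' (1:ℝ) i) := rfl
      rw [this, EuclideanSpace.single_apply]
      simp [hii, hzi]
    have h2 := (hsub ⟨hz2S, hz2i⟩).2
    have : z2 i' = z i' + (ε/2) := by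
      rw [hz2def]
      have : (z + (ε/2) • EuclideanSpace.single i' (1:ℝ)) i'
          = z i' + (ε/2) * (EuclideanSpace.single i' (1:ℝ) i') := rfl
      rw [this, EuclideanSpace.single_apply]
      simp
    rw [this, hz'.2] at h2
    linarith

lemma mem_image_iff' {d : ℕ} {S S' : Set (Euc d)} {h hinv : Euc d → Euc d}
    (hdiff : IsSmoothDiffeoOn h hinv S S') {X : Set (Euc d)} (hX : X ⊆ S)
    {z' : Euc d} (hz' : z' ∈ S') : z' ∈ h '' X ↔ hinv z' ∈ X := by
  constructor
  · rintro ⟨z, hz, rfl⟩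
    rw [hdiff.left_inv z (hX hz)]
    exact hz
  · intro hmem
    exact ⟨hinv z', hmem, hdiff.right_inv z' hz'⟩

lemma conn_sub {α : Type*} [TopologicalSpace α] {X P N : Set α} (hX : IsPreconnected X)
    (hP : IsOpen P) (hN : IsOpen N) (hd : ∀ x, x ∈ P → x ∈ N → False)
    (hsub : X ⊆ P ∪ N) : X ⊆ P ∨ X ⊆ N := by
  by_cases h1 : (X ∩ P).Nonempty
  · by_cases h2 : (X ∩ N).Nonempty
    · exfalso
      obtain ⟨x, hx⟩ := hX P N hP hN hsub h1 h2
      exact hd x hx.2.1 hx.2.2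
    · left
      intro x hx
      rcases hsub hx with h | h
      · exact h
      · exact absurd ⟨x, hx, h⟩ h2
  · right
    intro x hx
    rcases hsub hx with h | h
    · exact absurd ⟨x, hx, h⟩ h1
    · exact h

lemma split_sets {α : Type*} {A B C D : Set α} (hU : A ∪ B = C ∪ D)
    (hAB : ∀ x, x ∈ A → x ∈ B → False) (hCD : ∀ x, x ∈ C → x ∈ D → False)
    (hA : A ⊆ C ∨ A ⊆ D) (hB : B ⊆ C ∨ B ⊆ D)
    (hCne : C.Nonempty) (hDne : D.Nonempty) :
    (A = C ∧ B = D) ∨ (A = D ∧ B = C) := by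
  have key : ∀ A' B' C' D' : Set α, A' ∪ B' = C' ∪ D' →
      (∀ x, x ∈ A' → x ∈ B' → False) → (∀ x, x ∈ C' → x ∈ D' → False) →
      D'.Nonempty → A' ⊆ C' → (B' ⊆ C' ∨ B' ⊆ D') → A' = C' ∧ B' = D' := by
    intro A' B' C' D' hU' hAB' hCD' hD'ne hAC hBor
    have hBD : B' ⊆ D' := by
      rcases hBor with hBC | hBD
      · exfalso
        obtain ⟨x, hx⟩ := hD'ne
        have : x ∈ A' ∪ B' := hU' ▸ Or.inr hx
        rcases this with h | h
        · exact hCD' x (hAC h) hx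
        · exact hCD' x (hBC h) hx
      · exact hBD
    constructor
    · apply Set.Subset.antisymm hAC
      intro x hx
      have : x ∈ A' ∪ B' := hU' ▸ Or.inl hx
      rcases this with h | h
      · exact h
      · exact absurd hx (fun hxC => hCD' x hxC (hBD h))
    · apply Set.Subset.antisymm hBD
      intro x hx
      have : x ∈ A' ∪ B' := hU' ▸ Or.inr hx
      rcases this with h | h
      · exact absurd hx (fun hxD => hCD' x (hAC h) hxD)
      · exact h
  rcases hA with hAC | hAD
  · exact Or.inl (key A B C D hU hAB hCD hDne hAC hB)
  · refine Or.inr (key A B D C ?_ hAB (fun x h1 h2 => hCD x h2 h1) hCne hAD ?_)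
    · rw [hU, Set.union_comm]
    · exact hB.symm

lemma pair_eq {d : ℕ} {S : Set (Euc d)} (C : DiscreteCoordination S)
    (p q : Σ i : Fin d, Fin (C.n i)) (h1 : p.1 = q.1)
    (h2 : C.A p.1 p.2 = C.A q.1 q.2) : p = q := by
  obtain ⟨i, k⟩ := p
  obtain ⟨i', k'⟩ := q
  simp only at h1
  subst h1
  simp only at h2
  rw [(C.mono i).injective h2]

lemma gammaPos_open {d : ℕ} {S : Set (Euc d)} (hS : IsOpen S) (i : Fin d) (τ : ℝ) :
    IsOpen (GammaPos S i τ) := by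
  have : GammaPos S i τ = S ∩ (fun z : Euc d => z i) ⁻¹' (Set.Ioi τ) := rfl
  rw [this]
  exact hS.inter ((euc_cont_coord i).isOpen_preimage _ isOpen_Ioi)

lemma gammaNeg_open {d : ℕ} {S : Set (Euc d)} (hS : IsOpen S) (i : Fin d) (τ : ℝ) :
    IsOpen (GammaNeg S i τ) := by
  have : GammaNeg S i τ = S ∩ (fun z : Euc d => z i) ⁻¹' (Set.Iio τ) := rfl
  rw [this]
  exact hS.inter ((euc_cont_coord i).isOpen_preimage _ isOpen_Iio)

lemma grid_sub {d : ℕ} {S : Set (Euc d)} (C : DiscreteCoordination S) :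
    C.grid ⊆ S := by
  intro z hz
  rw [DiscreteCoordination.grid] at hz
  simp only [Set.mem_iUnion] at hz
  obtain ⟨i, k, hzi⟩ := hz
  exact hzi.1

lemma mem_grid_iff {d : ℕ} {S : Set (Euc d)} (C : DiscreteCoordination S) (z : Euc d)
    (hzS : z ∈ S) : z ∈ C.grid ↔ ∃ p : Σ i : Fin d, Fin (C.n i), z p.1 = C.A p.1 p.2 := by
  rw [DiscreteCoordination.grid]
  simp only [Set.mem_iUnion]
  constructor
  · rintro ⟨i, k, _, hzi⟩
    exact ⟨⟨i, k⟩, hzi⟩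
  · rintro ⟨⟨i, k⟩, hzi⟩
    exact ⟨i, k, hzS, hzi⟩

/-- **Grid structure preservation and recovery theorem.** -/
theorem grid_structure_preservation_and_recovery
    {d : ℕ} {S S' : Set (Euc d)} (hS : IsOpen S) (hSc : IsConnected S)
    (hS' : IsOpen S') (hS'c : IsConnected S')
    {h hinv : Euc d → Euc d} (hdiff : IsSmoothDiffeoOn h hinv S S')
    (CA : DiscreteCoordination S) (hbb : CA.HasBackbone)
    (CB : DiscreteCoordination S')
    (hgrid : h '' CA.grid = CB.grid) :
    ∃ (σ : Equiv.Perm (Fin d)) (s : Fin d → ℤ),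
      (∀ i, s i = 1 ∨ s i = -1) ∧
      ∀ j : Fin d, ∃ hK : CA.n (σ.symm j) = CB.n j,
        ∀ k : Fin (CA.n (σ.symm j)), ∀ z' ∈ S',
          (s (σ.symm j) = 1 →
            ((z' j = CB.A j (Fin.cast hK k) ↔ hinv z' (σ.symm j) = CA.A (σ.symm j) k) ∧
             (z' j > CB.A j (Fin.cast hK k) ↔ hinv z' (σ.symm j) > CA.A (σ.symm j) k) ∧
             (z' j < CB.A j (Fin.cast hK k) ↔ hinv z' (σ.symm j) < CA.A (σ.symm j) k))) ∧
          (s (σ.symm j) = -1 →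
            ((z' j = CB.A j (Fin.cast hK k) ↔ hinv z' (σ.symm j) = CA.A (σ.symm j) k.rev) ∧
             (z' j > CB.A j (Fin.cast hK k) ↔ hinv z' (σ.symm j) < CA.A (σ.symm j) k.rev) ∧
             (z' j < CB.A j (Fin.cast hK k) ↔ hinv z' (σ.symm j) > CA.A (σ.symm j) k.rev))) := by
  classical
  obtain ⟨kstar, ⟨zstar, hzstar⟩, hmeet⟩ := hbb
  have hgridAB : ∀ z ∈ CA.grid, h z ∈ CB.grid := by
    intro z hz; rw [← hgrid]; exact Set.mem_image_of_mem h hz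
  have hgridBA : ∀ w ∈ CB.grid, hinv w ∈ CA.grid := by
    intro w hw
    rw [← hgrid] at hw
    obtain ⟨z, hz, rfl⟩ := hw
    rw [hdiff.left_inv z (grid_sub CA hz)]
    exact hz
  have hfex : ∀ p : Σ i : Fin d, Fin (CA.n i), ∃ q : Σ jj : Fin d, Fin (CB.n jj),
      ∀ z ∈ Gamma S p.1 (CA.A p.1 p.2), h z q.1 = CB.A q.1 q.2 := by
    intro p
    apply main_sep hS' hS hdiff.symm CB p.1 (CA.A p.1 p.2) (CA.sep p.1 p.2).1
    intro z hz
    have := hgridAB z ((mem_grid_iff CA z hz.1).mpr ⟨p, hz.2⟩)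
    exact (mem_grid_iff CB (h z) (hdiff.mapsTo hz.1)).mp this
  choose f hfw using hfex
  have hgex : ∀ q : Σ jj : Fin d, Fin (CB.n jj), ∃ p : Σ i : Fin d, Fin (CA.n i),
      ∀ w ∈ Gamma S' q.1 (CB.A q.1 q.2), hinv w p.1 = CA.A p.1 p.2 := by
    intro q
    apply main_sep hS hS' hdiff CA q.1 (CB.A q.1 q.2) (CB.sep q.1 q.2).1
    intro w hw
    have := hgridBA w ((mem_grid_iff CB w hw.1).mpr ⟨q, hw.2⟩)
    exact (mem_grid_iff CA (hinv w) (hdiff.mapsTo_inv hw.1)).mp this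
  choose g hgw using hgex
  have hgf : ∀ p, g (f p) = p := by
    intro p
    have hne : (Gamma S p.1 (CA.A p.1 p.2)).Nonempty := (CA.sep p.1 p.2).1.nonempty
    have hsub2 : Gamma S p.1 (CA.A p.1 p.2) ⊆
        Gamma S (g (f p)).1 (CA.A (g (f p)).1 (g (f p)).2) := by
      intro z hz
      have h1 : h z ∈ Gamma S' (f p).1 (CB.A (f p).1 (f p).2) :=
        ⟨hdiff.mapsTo hz.1, hfw p z hz⟩
      have h2 := hgw (f p) (h z) h1
      rw [hdiff.left_inv z hz.1] at h2
      exact ⟨hz.1, h2⟩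
    obtain ⟨hfst, hτ⟩ := gamma_sub hS hne hsub2
    exact (pair_eq CA p (g (f p)) hfst hτ).symm
  have hfg : ∀ q, f (g q) = q := by
    intro q
    have hne : (Gamma S' q.1 (CB.A q.1 q.2)).Nonempty := (CB.sep q.1 q.2).1.nonempty
    have hsub2 : Gamma S' q.1 (CB.A q.1 q.2) ⊆
        Gamma S' (f (g q)).1 (CB.A (f (g q)).1 (f (g q)).2) := by
      intro w hw
      have h1 : hinv w ∈ Gamma S (g q).1 (CA.A (g q).1 (g q).2) :=
        ⟨hdiff.mapsTo_inv hw.1, hgw q w hw⟩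
      have h2 := hfw (g q) (hinv w) h1
      rw [hdiff.right_inv w hw.1] at h2
      exact ⟨hw.1, h2⟩
    obtain ⟨hfst, hτ⟩ := gamma_sub hS' hne hsub2
    exact (pair_eq CB q (f (g q)) hfst hτ).symm
  have hfinj : Function.Injective f := Function.LeftInverse.injective hgf
  have hzmem : ∀ i : Fin d, zstar ∈ Gamma S i (CA.A i (kstar i)) := by
    intro i
    have : zstar ∈ ⋂ i : Fin d, Gamma S i (CA.A i (kstar i)) := by
      rw [hzstar]; exact Set.mem_singleton _
    exact Set.mem_iInter.mp this i
  set a : Fin d → Fin d := fun i => (f ⟨i, kstar i⟩).1 with hadef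
  have hainj : Function.Injective a := by
    intro i i' hai
    have h1 : h zstar ∈ Gamma S' (f ⟨i, kstar i⟩).1
        (CB.A (f ⟨i, kstar i⟩).1 (f ⟨i, kstar i⟩).2) :=
      ⟨hdiff.mapsTo (hzmem i).1, hfw _ zstar (hzmem i)⟩
    have h2 : h zstar ∈ Gamma S' (f ⟨i', kstar i'⟩).1
        (CB.A (f ⟨i', kstar i'⟩).1 (f ⟨i', kstar i'⟩).2) :=
      ⟨hdiff.mapsTo (hzmem i').1, hfw _ zstar (hzmem i')⟩
    have h3 : CB.A (f ⟨i, kstar i⟩).1 (f ⟨i, kstar i⟩).2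
        = CB.A (f ⟨i', kstar i'⟩).1 (f ⟨i', kstar i'⟩).2 := by
      rw [← h1.2, ← h2.2]
      exact congrArg (h zstar) hai
    have h4 := hfinj (pair_eq CB _ _ hai h3)
    exact congrArg Sigma.fst h4
  have habij : Function.Bijective a := Finite.injective_iff_bijective.mp hainj
  refine ⟨Equiv.ofBijective a habij,
    (fun i0 => if (h '' GammaPos S i0 (CA.A i0 ⟨0, CA.n_pos i0⟩)
      = GammaPos S' (f ⟨i0, ⟨0, CA.n_pos i0⟩⟩).1
        (CB.A (f ⟨i0, ⟨0, CA.n_pos i0⟩⟩).1 (f ⟨i0, ⟨0, CA.n_pos i0⟩⟩).2)) then 1 else -1),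
    ?_, ?_⟩
  · intro i0
    by_cases hc : (h '' GammaPos S i0 (CA.A i0 ⟨0, CA.n_pos i0⟩)
      = GammaPos S' (f ⟨i0, ⟨0, CA.n_pos i0⟩⟩).1
        (CB.A (f ⟨i0, ⟨0, CA.n_pos i0⟩⟩).1 (f ⟨i0, ⟨0, CA.n_pos i0⟩⟩).2))
    · left; simp [hc]
    · right; simp [hc]
  -- main per-axis work
  have haxis : ∀ (i : Fin d) (k : Fin (CA.n i)), (f ⟨i, k⟩).1 = a i := by
    intro i k
    by_contra hne
    obtain ⟨i', hi'⟩ := habij.2 (f ⟨i, k⟩).1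
    have hii' : i ≠ i' := by
      rintro rfl
      exact hne hi'.symm
    obtain ⟨z, hz1, hz2⟩ := hmeet i' i hii' k
    have hq1 : h z ∈ Gamma S' (f ⟨i', kstar i'⟩).1
        (CB.A (f ⟨i', kstar i'⟩).1 (f ⟨i', kstar i'⟩).2) :=
      ⟨hdiff.mapsTo hz1.1, hfw _ z hz1⟩
    have hq2 : h z ∈ Gamma S' (f ⟨i, k⟩).1 (CB.A (f ⟨i, k⟩).1 (f ⟨i, k⟩).2) :=
      ⟨hdiff.mapsTo hz2.1, hfw _ z hz2⟩
    have hfsteq : (f ⟨i, k⟩).1 = (f ⟨i', kstar i'⟩).1 := hi'.symm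
    have h3 : CB.A (f ⟨i, k⟩).1 (f ⟨i, k⟩).2
        = CB.A (f ⟨i', kstar i'⟩).1 (f ⟨i', kstar i'⟩).2 := by
      rw [← hq2.2, ← hq1.2]
      exact congrArg (h z) hfsteq
    have h4 := hfinj (pair_eq CB _ _ hfsteq h3)
    exact hii' (congrArg Sigma.fst h4)
  intro j
  set i : Fin d := (Equiv.ofBijective a habij).symm j with hidef
  have haij : a i = j := (Equiv.ofBijective a habij).apply_symm_apply j
  have hax : ∀ k : Fin (CA.n i), (f ⟨i, k⟩).1 = j := fun k => (haxis i k).trans haij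
  set lam : Fin (CA.n i) → Fin (CB.n j) :=
    fun k => Fin.cast (congrArg CB.n (hax k)) (f ⟨i, k⟩).2 with hlamdef
  have hfq : ∀ k : Fin (CA.n i), f ⟨i, k⟩ = ⟨j, lam k⟩ :=
    fun k => sigma_cast (f ⟨i, k⟩) j (hax k)
  have haxg : ∀ l : Fin (CB.n j), (g ⟨j, l⟩).1 = i := by
    intro l
    have h1 : (f ⟨(g ⟨j, l⟩).1, (g ⟨j, l⟩).2⟩).1 = a ((g ⟨j, l⟩).1) :=
      haxis (g ⟨j, l⟩).1 (g ⟨j, l⟩).2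
    have h2 : (⟨(g ⟨j, l⟩).1, (g ⟨j, l⟩).2⟩ : Σ i0 : Fin d, Fin (CA.n i0)) = g ⟨j, l⟩ := rfl
    rw [h2, hfg ⟨j, l⟩] at h1
    exact hainj ((haij.trans h1).symm)
  have hgq : ∀ l : Fin (CB.n j), g ⟨j, l⟩
      = ⟨i, Fin.cast (congrArg CA.n (haxg l)) (g ⟨j, l⟩).2⟩ :=
    fun l => sigma_cast (g ⟨j, l⟩) i (haxg l)
  set mu : Fin (CB.n j) → Fin (CA.n i) :=
    fun l => Fin.cast (congrArg CA.n (haxg l)) (g ⟨j, l⟩).2 with hmudef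
  have hml : ∀ l, lam (mu l) = l := by
    intro l
    have h1 : f ⟨i, mu l⟩ = ⟨j, lam (mu l)⟩ := hfq _
    have h2 : f ⟨i, mu l⟩ = ⟨j, l⟩ := by
      rw [← hgq l]
      exact hfg ⟨j, l⟩
    exact (sigma_snd_eq (h1.symm.trans h2))
  have hlm : ∀ k, mu (lam k) = k := by
    intro k
    have h1 : g ⟨j, lam k⟩ = ⟨i, mu (lam k)⟩ := hgq _
    have h2 : g ⟨j, lam k⟩ = ⟨i, k⟩ := by
      rw [← hfq k]
      exact hgf ⟨i, k⟩
    exact sigma_snd_eq (h1.symm.trans h2)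
  have hlaminj : Function.Injective lam := Function.LeftInverse.injective hlm
  have hlamsurj : Function.Surjective lam := Function.RightInverse.surjective hml
  have hK : CA.n i = CB.n j := by
    have := Fintype.card_of_bijective ⟨hlaminj, hlamsurj⟩
    simpa using this
  refine ⟨hK, ?_⟩
  -- membership correspondence for separators
  have hmemΓ : ∀ (k : Fin (CA.n i)) (z : Euc d), z ∈ Gamma S i (CA.A i k) →
      h z ∈ Gamma S' j (CB.A j (lam k)) := by
    intro k z hz
    have h1 := hfw ⟨i, k⟩ z hz
    rw [hfq k] at h1
    exact ⟨hdiff.mapsTo hz.1, h1⟩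
  have hmemΓ' : ∀ (k : Fin (CA.n i)) (w : Euc d), w ∈ Gamma S' j (CB.A j (lam k)) →
      hinv w ∈ Gamma S i (CA.A i k) := by
    intro k w hw
    have h1 := hgw ⟨j, lam k⟩ w hw
    have h2 : g ⟨j, lam k⟩ = ⟨i, k⟩ := by
      rw [← hfq k]
      exact hgf ⟨i, k⟩
    rw [h2] at h1
    exact ⟨hdiff.mapsTo_inv hw.1, h1⟩
  -- image of complement
  have hcompl : ∀ k : Fin (CA.n i),
      h '' (GammaPos S i (CA.A i k) ∪ GammaNeg S i (CA.A i k))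
      = GammaPos S' j (CB.A j (lam k)) ∪ GammaNeg S' j (CB.A j (lam k)) := by
    intro k
    ext z'
    constructor
    · rintro ⟨z, hz, rfl⟩
      have hzS : z ∈ S := by rcases hz with hp | hn; exacts [hp.1, hn.1]
      have hzS' : h z ∈ S' := hdiff.mapsTo hzS
      have hne : h z j ≠ CB.A j (lam k) := by
        intro heq
        have hmem := hmemΓ' k (h z) ⟨hzS', heq⟩
        rw [hdiff.left_inv z hzS] at hmem
        rcases hz with hp | hn
        · exact absurd hmem.2 (ne_of_gt hp.2)
        · exact absurd hmem.2 (ne_of_lt hn.2)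
      rcases lt_or_gt_of_ne hne with hlt | hgt
      · exact Or.inr ⟨hzS', hlt⟩
      · exact Or.inl ⟨hzS', hgt⟩
    · intro hz'
      have hz'S' : z' ∈ S' := by rcases hz' with hp | hn; exacts [hp.1, hn.1]
      have hxS : hinv z' ∈ S := hdiff.mapsTo_inv hz'S'
      have hne : hinv z' i ≠ CA.A i k := by
        intro heq
        have hmem := hmemΓ k (hinv z') ⟨hxS, heq⟩
        rw [hdiff.right_inv z' hz'S'] at hmem
        rcases hz' with hp | hn
        · exact absurd hmem.2 (ne_of_gt hp.2)
        · exact absurd hmem.2 (ne_of_lt hn.2)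
      have hmem : hinv z' ∈ GammaPos S i (CA.A i k) ∪ GammaNeg S i (CA.A i k) := by
        rcases lt_or_gt_of_ne hne with hlt | hgt
        · exact Or.inr ⟨hxS, hlt⟩
        · exact Or.inl ⟨hxS, hgt⟩
      exact ⟨hinv z', hmem, hdiff.right_inv z' hz'S'⟩
  have hPNdisj : ∀ l : Fin (CB.n j), ∀ x, x ∈ GammaPos S' j (CB.A j l) →
      x ∈ GammaNeg S' j (CB.A j l) → False :=
    fun l x h1 h2 => lt_asymm h1.2 h2.2
  have hsplit : ∀ k : Fin (CA.n i),
      (h '' GammaPos S i (CA.A i k) = GammaPos S' j (CB.A j (lam k)) ∧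
       h '' GammaNeg S i (CA.A i k) = GammaNeg S' j (CB.A j (lam k))) ∨
      (h '' GammaPos S i (CA.A i k) = GammaNeg S' j (CB.A j (lam k)) ∧
       h '' GammaNeg S i (CA.A i k) = GammaPos S' j (CB.A j (lam k))) := by
    intro k
    have hXY : h '' GammaPos S i (CA.A i k) ∪ h '' GammaNeg S i (CA.A i k)
        = GammaPos S' j (CB.A j (lam k)) ∪ GammaNeg S' j (CB.A j (lam k)) := by
      rw [← Set.image_union]
      exact hcompl k
    have hXc : IsPreconnected (h '' GammaPos S i (CA.A i k)) :=
      ((CA.sep i k).2.1.image h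
        (hdiff.smooth.continuousOn.mono (fun z hz => hz.1))).isPreconnected
    have hYc : IsPreconnected (h '' GammaNeg S i (CA.A i k)) :=
      ((CA.sep i k).2.2.image h
        (hdiff.smooth.continuousOn.mono (fun z hz => hz.1))).isPreconnected
    have hXsub : h '' GammaPos S i (CA.A i k)
        ⊆ GammaPos S' j (CB.A j (lam k)) ∪ GammaNeg S' j (CB.A j (lam k)) := by
      rw [← hXY]; exact Set.subset_union_left
    have hYsub : h '' GammaNeg S i (CA.A i k)
        ⊆ GammaPos S' j (CB.A j (lam k)) ∪ GammaNeg S' j (CB.A j (lam k)) := by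
      rw [← hXY]; exact Set.subset_union_right
    have hXor := conn_sub hXc (gammaPos_open hS' j _) (gammaNeg_open hS' j _)
      (hPNdisj (lam k)) hXsub
    have hYor := conn_sub hYc (gammaPos_open hS' j _) (gammaNeg_open hS' j _)
      (hPNdisj (lam k)) hYsub
    have hXYdisj : ∀ x, x ∈ h '' GammaPos S i (CA.A i k) →
        x ∈ h '' GammaNeg S i (CA.A i k) → False := by
      rintro x ⟨z1, hz1, rfl⟩ ⟨z2, hz2, he⟩
      have hz21 : z2 = z1 := by
        have := congrArg hinv he
        rwa [hdiff.left_inv z2 hz2.1, hdiff.left_inv z1 hz1.1] at this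
      subst hz21
      exact lt_asymm hz1.2 hz2.2
    exact split_sets hXY hXYdisj (hPNdisj (lam k)) hXor hYor
      (CB.sep j (lam k)).2.1.nonempty (CB.sep j (lam k)).2.2.nonempty
  -- order transfer
  have hordP : ∀ k : Fin (CA.n i),
      (h '' GammaPos S i (CA.A i k) = GammaPos S' j (CB.A j (lam k)) ∧
       h '' GammaNeg S i (CA.A i k) = GammaNeg S' j (CB.A j (lam k))) →
      ∀ k', (k < k' → lam k < lam k') ∧ (k' < k → lam k' < lam k) := by
    intro k hsp k'
    obtain ⟨z, hzS, hzi⟩ := (CA.sep i k').1.nonempty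
    have hΓz := hmemΓ k' z ⟨hzS, hzi⟩
    constructor
    · intro hkk'
      have hzPos : z ∈ GammaPos S i (CA.A i k) :=
        ⟨hzS, by rw [hzi]; exact (CA.mono i) hkk'⟩
      have himgz : h z ∈ GammaPos S' j (CB.A j (lam k)) := by
        rw [← hsp.1]; exact Set.mem_image_of_mem h hzPos
      have hlt : CB.A j (lam k) < CB.A j (lam k') := by
        rw [← hΓz.2]; exact himgz.2
      exact (CB.mono j).lt_iff_lt.mp hlt
    · intro hk'k
      have hzNeg : z ∈ GammaNeg S i (CA.A i k) :=
        ⟨hzS, by rw [hzi]; exact (CA.mono i) hk'k⟩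
      have himgz : h z ∈ GammaNeg S' j (CB.A j (lam k)) := by
        rw [← hsp.2]; exact Set.mem_image_of_mem h hzNeg
      have hlt : CB.A j (lam k') < CB.A j (lam k) := by
        rw [← hΓz.2]; exact himgz.2
      exact (CB.mono j).lt_iff_lt.mp hlt
  have hordN : ∀ k : Fin (CA.n i),
      (h '' GammaPos S i (CA.A i k) = GammaNeg S' j (CB.A j (lam k)) ∧
       h '' GammaNeg S i (CA.A i k) = GammaPos S' j (CB.A j (lam k))) →
      ∀ k', (k < k' → lam k' < lam k) ∧ (k' < k → lam k < lam k') := by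
    intro k hsn k'
    obtain ⟨z, hzS, hzi⟩ := (CA.sep i k').1.nonempty
    have hΓz := hmemΓ k' z ⟨hzS, hzi⟩
    constructor
    · intro hkk'
      have hzPos : z ∈ GammaPos S i (CA.A i k) :=
        ⟨hzS, by rw [hzi]; exact (CA.mono i) hkk'⟩
      have himgz : h z ∈ GammaNeg S' j (CB.A j (lam k)) := by
        rw [← hsn.1]; exact Set.mem_image_of_mem h hzPos
      have hlt : CB.A j (lam k') < CB.A j (lam k) := by
        rw [← hΓz.2]; exact himgz.2
      exact (CB.mono j).lt_iff_lt.mp hlt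
    · intro hk'k
      have hzNeg : z ∈ GammaNeg S i (CA.A i k) :=
        ⟨hzS, by rw [hzi]; exact (CA.mono i) hk'k⟩
      have himgz : h z ∈ GammaPos S' j (CB.A j (lam k)) := by
        rw [← hsn.2]; exact Set.mem_image_of_mem h hzNeg
      have hlt : CB.A j (lam k) < CB.A j (lam k') := by
        rw [← hΓz.2]; exact himgz.2
      exact (CB.mono j).lt_iff_lt.mp hlt
  -- the sign condition, rewritten along hfq
  have hCnd : (h '' GammaPos S i (CA.A i ⟨0, CA.n_pos i⟩)
      = GammaPos S' (f ⟨i, ⟨0, CA.n_pos i⟩⟩).1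
        (CB.A (f ⟨i, ⟨0, CA.n_pos i⟩⟩).1 (f ⟨i, ⟨0, CA.n_pos i⟩⟩).2))
      ↔ (h '' GammaPos S i (CA.A i ⟨0, CA.n_pos i⟩)
        = GammaPos S' j (CB.A j (lam ⟨0, CA.n_pos i⟩))) := by
    rw [hfq ⟨0, CA.n_pos i⟩]
  have hnotboth : ∀ k : Fin (CA.n i),
      ¬(h '' GammaPos S i (CA.A i k) = GammaPos S' j (CB.A j (lam k)) ∧
        h '' GammaPos S i (CA.A i k) = GammaNeg S' j (CB.A j (lam k))) := by
    rintro k ⟨h1, h2⟩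
    obtain ⟨x, hx⟩ := (CB.sep j (lam k)).2.1.nonempty
    have hx2 : x ∈ GammaNeg S' j (CB.A j (lam k)) := by
      rw [← h2, h1]; exact hx
    exact hPNdisj (lam k) x hx hx2
  intro k z' hz'
  constructor
  · -- positive orientation
    intro hs1
    have hC : h '' GammaPos S i (CA.A i ⟨0, CA.n_pos i⟩)
        = GammaPos S' j (CB.A j (lam ⟨0, CA.n_pos i⟩)) := by
      apply hCnd.mp
      by_contra hc
      simp only [if_neg hc] at hs1
      norm_num at hs1
    have hSP0 : h '' GammaPos S i (CA.A i ⟨0, CA.n_pos i⟩)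
        = GammaPos S' j (CB.A j (lam ⟨0, CA.n_pos i⟩)) ∧
        h '' GammaNeg S i (CA.A i ⟨0, CA.n_pos i⟩)
        = GammaNeg S' j (CB.A j (lam ⟨0, CA.n_pos i⟩)) := by
      rcases hsplit ⟨0, CA.n_pos i⟩ with hsp | hsn
      · exact hsp
      · exact absurd ⟨hC, hsn.1⟩ (hnotboth _)
    have hSPall : ∀ κ : Fin (CA.n i),
        h '' GammaPos S i (CA.A i κ) = GammaPos S' j (CB.A j (lam κ)) ∧
        h '' GammaNeg S i (CA.A i κ) = GammaNeg S' j (CB.A j (lam κ)) := by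
      intro κ
      rcases hsplit κ with hsp | hsn
      · exact hsp
      · exfalso
        by_cases hκ0 : κ = ⟨0, CA.n_pos i⟩
        · subst hκ0
          exact absurd ⟨hSP0.1, hsn.1⟩ (hnotboth _)
        · have h0κ : (⟨0, CA.n_pos i⟩ : Fin (CA.n i)) < κ := by
            have hvne : κ.val ≠ 0 := fun hv => hκ0 (Fin.ext hv)
            exact Fin.lt_def.mpr (Nat.pos_of_ne_zero hvne)
          have hlt1 : lam ⟨0, CA.n_pos i⟩ < lam κ := (hordP _ hSP0 κ).1 h0κ
          have hlt2 : lam κ < lam ⟨0, CA.n_pos i⟩ := (hordN κ hsn _).2 h0κ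
          exact lt_asymm hlt1 hlt2
    have hmono : StrictMono lam := fun κ κ' hkk => (hordP κ (hSPall κ) κ').1 hkk
    have hlamid : ∀ κ, lam κ = Fin.cast hK κ := by
      have hiso : (StrictMono.orderIsoOfSurjective lam hmono hlamsurj)
          = Fin.castOrderIso hK := Subsingleton.elim _ _
      intro κ
      have h1 : (StrictMono.orderIsoOfSurjective lam hmono hlamsurj) κ = lam κ := rfl
      rw [hiso] at h1
      rw [← h1]
      simp
    rw [← hlamid k]
    refine ⟨?_, ?_, ?_⟩
    · constructor
      · intro he
        exact (hmemΓ' k z' ⟨hz', he⟩).2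
      · intro he
        have hmem := hmemΓ k (hinv z') ⟨hdiff.mapsTo_inv hz', he⟩
        rw [hdiff.right_inv z' hz'] at hmem
        exact hmem.2
    · constructor
      · intro hgt
        have hmem : z' ∈ GammaPos S' j (CB.A j (lam k)) := ⟨hz', hgt⟩
        rw [← (hSPall k).1] at hmem
        exact ((mem_image_iff' hdiff (fun z hz => hz.1) hz').mp hmem).2
      · intro hgt
        have hmem : hinv z' ∈ GammaPos S i (CA.A i k) := ⟨hdiff.mapsTo_inv hz', hgt⟩
        have hmem2 := (mem_image_iff' hdiff
          (fun z (hz : z ∈ GammaPos S i (CA.A i k)) => hz.1) hz').mpr hmem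
        rw [(hSPall k).1] at hmem2
        exact hmem2.2
    · constructor
      · intro hlt
        have hmem : z' ∈ GammaNeg S' j (CB.A j (lam k)) := ⟨hz', hlt⟩
        rw [← (hSPall k).2] at hmem
        exact ((mem_image_iff' hdiff (fun z hz => hz.1) hz').mp hmem).2
      · intro hlt
        have hmem : hinv z' ∈ GammaNeg S i (CA.A i k) := ⟨hdiff.mapsTo_inv hz', hlt⟩
        have hmem2 := (mem_image_iff' hdiff
          (fun z (hz : z ∈ GammaNeg S i (CA.A i k)) => hz.1) hz').mpr hmem
        rw [(hSPall k).2] at hmem2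
        exact hmem2.2
  · -- negative orientation
    intro hsm1
    have hC : ¬ (h '' GammaPos S i (CA.A i ⟨0, CA.n_pos i⟩)
        = GammaPos S' j (CB.A j (lam ⟨0, CA.n_pos i⟩))) := by
      intro hc
      have := hCnd.mpr hc
      simp only [if_pos this] at hsm1
      norm_num at hsm1
    have hSN0 : h '' GammaPos S i (CA.A i ⟨0, CA.n_pos i⟩)
        = GammaNeg S' j (CB.A j (lam ⟨0, CA.n_pos i⟩)) ∧
        h '' GammaNeg S i (CA.A i ⟨0, CA.n_pos i⟩)
        = GammaPos S' j (CB.A j (lam ⟨0, CA.n_pos i⟩)) := by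
      rcases hsplit ⟨0, CA.n_pos i⟩ with hsp | hsn
      · exact absurd hsp.1 hC
      · exact hsn
    have hSNall : ∀ κ : Fin (CA.n i),
        h '' GammaPos S i (CA.A i κ) = GammaNeg S' j (CB.A j (lam κ)) ∧
        h '' GammaNeg S i (CA.A i κ) = GammaPos S' j (CB.A j (lam κ)) := by
      intro κ
      rcases hsplit κ with hsp | hsn
      · exfalso
        by_cases hκ0 : κ = ⟨0, CA.n_pos i⟩
        · subst hκ0
          exact absurd ⟨hsp.1, hSN0.1⟩ (hnotboth _)
        · have h0κ : (⟨0, CA.n_pos i⟩ : Fin (CA.n i)) < κ := by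
            have hvne : κ.val ≠ 0 := fun hv => hκ0 (Fin.ext hv)
            exact Fin.lt_def.mpr (Nat.pos_of_ne_zero hvne)
          have hlt1 : lam κ < lam ⟨0, CA.n_pos i⟩ := (hordN _ hSN0 κ).1 h0κ
          have hlt2 : lam ⟨0, CA.n_pos i⟩ < lam κ := (hordP κ hsp _).2 h0κ
          exact lt_asymm hlt1 hlt2
      · exact hsn
    have hmono2 : StrictMono (fun κ => (lam κ).rev) := by
      intro κ κ' hkk
      have : lam κ' < lam κ := (hordN κ (hSNall κ) κ').1 hkk
      exact Fin.rev_lt_rev.mpr this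
    have hsurj2 : Function.Surjective (fun κ => (lam κ).rev) := by
      intro l
      obtain ⟨κ, hκ⟩ := hlamsurj l.rev
      exact ⟨κ, by show (lam κ).rev = l; rw [hκ, Fin.rev_rev]⟩
    have hlamrev : ∀ κ, (lam κ).rev = Fin.cast hK κ := by
      have hiso : (StrictMono.orderIsoOfSurjective _ hmono2 hsurj2)
          = Fin.castOrderIso hK := Subsingleton.elim _ _
      intro κ
      have h1 : (StrictMono.orderIsoOfSurjective _ hmono2 hsurj2) κ = (lam κ).rev := rfl
      rw [hiso] at h1
      rw [← h1]
      simp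
    have hcast : lam k.rev = Fin.cast hK k := by
      have h1 : (lam k.rev).rev = Fin.cast hK k.rev := hlamrev k.rev
      have h2 : lam k.rev = (Fin.cast hK k.rev).rev := by
        rw [← h1, Fin.rev_rev]
      rw [h2]
      apply Fin.ext
      simp only [Fin.val_rev, Fin.coe_cast]
      have hlt1 := k.isLt
      have hlt2 : (k.rev : ℕ) < CA.n i := k.rev.isLt
      have hKK : CA.n i = CB.n j := hK
      omega
    rw [← hcast]
    refine ⟨?_, ?_, ?_⟩
    · constructor
      · intro he
        exact (hmemΓ' k.rev z' ⟨hz', he⟩).2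
      · intro he
        have hmem := hmemΓ k.rev (hinv z') ⟨hdiff.mapsTo_inv hz', he⟩
        rw [hdiff.right_inv z' hz'] at hmem
        exact hmem.2
    · constructor
      · intro hgt
        have hmem : z' ∈ GammaPos S' j (CB.A j (lam k.rev)) := ⟨hz', hgt⟩
        rw [← (hSNall k.rev).2] at hmem
        exact ((mem_image_iff' hdiff (fun z hz => hz.1) hz').mp hmem).2
      · intro hlt
        have hmem : hinv z' ∈ GammaNeg S i (CA.A i k.rev) := ⟨hdiff.mapsTo_inv hz', hlt⟩
        have hmem2 := (mem_image_iff' hdiff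
          (fun z (hz : z ∈ GammaNeg S i (CA.A i k.rev)) => hz.1) hz').mpr hmem
        rw [(hSNall k.rev).2] at hmem2
        exact hmem2.2
    · constructor
      · intro hlt
        have hmem : z' ∈ GammaNeg S' j (CB.A j (lam k.rev)) := ⟨hz', hlt⟩
        rw [← (hSNall k.rev).1] at hmem
        exact ((mem_image_iff' hdiff (fun z hz => hz.1) hz').mp hmem).2
      · intro hgt
        have hmem : hinv z' ∈ GammaPos S i (CA.A i k.rev) := ⟨hdiff.mapsTo_inv hz', hgt⟩
        have hmem2 := (mem_image_iff' hdiff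
          (fun z (hz : z ∈ GammaPos S i (CA.A i k.rev)) => hz.1) hz').mpr hmem
        rw [(hSNall k.rev).1] at hmem2
        exact hmem2.2
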